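/- If F : Ω → U is a continuous frame for a Hilbert C*-module U with frame operator S_F, and G₁ : Ω → U is a dual of F, then the mapping G₂ defined by G₂(ω) = S_F⁻¹F(ω) + S_F G₁(ω) − F(ω) is also a dual of F. -/

import Mathlib

open MeasureTheory

noncomputable section

variable {A : Type*} [CStarAlgebra A] [PartialOrder A] [StarOrderedRing A]
variable {U : Type*} [AddCommGroup U] [Module A U]
variable {Ω : Type*} [MeasurableSpace Ω]

/-- `F : Ω → U` is a continuous Bessel mapping with bound `B`, with respect to the
`A`-valued inner product `ip` (which is `A`-linear in the first variable). -/
def IsBessel (μ : Measure Ω) (ip : U → U → A) (F : Ω → U) (B : ℝ) : Prop :=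
  (∀ f g : U, Integrable (fun ω => ip f (F ω) * ip (F ω) g) μ) ∧
    ∀ f : U, ∫ ω, ip f (F ω) * ip (F ω) f ∂μ ≤ B • ip f f

/-- `F : Ω → U` is a continuous frame with frame bounds `A₀`, `B₀`. -/
def IsFrame (μ : Measure Ω) (ip : U → U → A) (F : Ω → U) (A₀ B₀ : ℝ) : Prop :=
  0 < A₀ ∧ 0 < B₀ ∧
    (∀ f g : U, Integrable (fun ω => ip f (F ω) * ip (F ω) g) μ) ∧
    ∀ f : U, A₀ • ip f f ≤ ∫ ω, ip f (F ω) * ip (F ω) f ∂μ ∧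
      ∫ ω, ip f (F ω) * ip (F ω) f ∂μ ≤ B₀ • ip f f

/-- `G` is a dual of `F`: the weak reconstruction formula
`⟨f, g⟩ = ∫ ⟨f, G ω⟩⟨F ω, g⟩ dμ(ω)` holds for all `f, g ∈ U`. -/
def IsDual (μ : Measure Ω) (ip : U → U → A) (F G : Ω → U) : Prop :=
  ∀ f g : U, ∫ ω, ip f (G ω) * ip (F ω) g ∂μ = ip f g

/-- `S` is the frame operator of `F`, in the weak sense:
`⟨S f, g⟩ = ∫ ⟨f, F ω⟩⟨F ω, g⟩ dμ(ω)`. -/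
def IsFrameOp (μ : Measure Ω) (ip : U → U → A) (F : Ω → U) (S : U → U) : Prop :=
  ∀ f g : U, ip (S f) g = ∫ ω, ip f (F ω) * ip (F ω) g ∂μ

theorem dual_from_dual
    (μ : Measure Ω) (ip : U → U → A)
    (hip_add : ∀ f g h : U, ip (f + g) h = ip f h + ip g h)
    (hip_smul : ∀ (a : A) (f g : U), ip (a • f) g = a * ip f g)
    (hip_star : ∀ f g : U, star (ip f g) = ip g f)
    (hip_pos : ∀ f : U, 0 ≤ ip f f)
    (hip_def : ∀ f : U, ip f f = 0 → f = 0)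
    (F : Ω → U) (A₀ B₀ : ℝ) (hF : IsFrame μ ip F A₀ B₀)
    (S Sinv : U → U) (hS : IsFrameOp μ ip F S)
    (hSinv₁ : ∀ f, Sinv (S f) = f) (hSinv₂ : ∀ f, S (Sinv f) = f)
    (G₁ : Ω → U) (B₁ : ℝ) (hB₁ : 0 < B₁)
    (hG₁Bessel : IsBessel μ ip G₁ B₁) (hG₁dual : IsDual μ ip F G₁) :
    (∃ B₂ : ℝ, 0 < B₂ ∧
        IsBessel μ ip (fun ω => Sinv (F ω) + S (G₁ ω) - F ω) B₂) ∧
      IsDual μ ip F (fun ω => Sinv (F ω) + S (G₁ ω) - F ω) := by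
    -- unpack hypotheses
  obtain ⟨hA₀, hB₀, hFint, hFbd⟩ := hF
  obtain ⟨hG₁int, hG₁bd⟩ := hG₁Bessel
  -- ## star and integral generalities
  have int_star' : ∀ φ : Ω → A, Integrable φ μ → Integrable (fun ω => star (φ ω)) μ :=
    fun φ h => ((starL' ℝ : A ≃L[ℝ] A).toContinuousLinearMap).integrable_comp h
  have int_star : ∀ φ : Ω → A, ∫ ω, star (φ ω) ∂μ = star (∫ ω, φ ω ∂μ) := by
    intro φ
    by_cases h : Integrable φ μ
    · exact ((starL' ℝ : A ≃L[ℝ] A).toContinuousLinearMap).integral_comp_comm h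
    · rw [integral_undef h, integral_undef, star_zero]
      intro hc
      exact h (by simpa [star_star] using int_star' _ hc)
  have int3 : ∀ p q r : Ω → A, Integrable p μ → Integrable q μ → Integrable r μ →
      ∫ ω, (p ω + q ω - r ω) ∂μ = (∫ ω, p ω ∂μ) + (∫ ω, q ω ∂μ) - ∫ ω, r ω ∂μ := by
    intro p q r hp hq hr
    have hpq : Integrable (fun ω => p ω + q ω) μ := hp.add hq
    rw [integral_sub hpq hr, integral_add hp hq]
  have intSmul : ∀ (c : ℝ) (φ : Ω → A), Integrable φ μ →
      Integrable (fun ω => c • φ ω) μ := fun c φ h => h.smul c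
  -- ## positivity of real scalar action
  have smul_nonneg' : ∀ r : ℝ, 0 ≤ r → ∀ a : A, 0 ≤ a → 0 ≤ r • a := by
    intro r hr a ha
    have key : (Real.sqrt r • (1 : A)) * a * (Real.sqrt r • (1 : A)) = r • a := by
      rw [smul_mul_assoc, one_mul, mul_smul_comm, mul_one, smul_smul, Real.mul_self_sqrt hr]
    have h1 : (0 : A) ≤ star (Real.sqrt r • (1 : A)) * a * (Real.sqrt r • (1 : A)) :=
      star_left_conjugate_nonneg ha _
    rwa [star_smul, star_one, star_trivial, key] at h1
  have smul_le : ∀ r : ℝ, 0 ≤ r → ∀ a b : A, a ≤ b → r • a ≤ r • b := by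
    intro r hr a b hab
    have h := smul_nonneg' r hr (b - a) (sub_nonneg.mpr hab)
    rw [smul_sub] at h
    exact sub_nonneg.mp h
  -- ## basic inner product lemmas
  have ip_zero_left : ∀ g : U, ip 0 g = 0 := by
    intro g
    have h := hip_add 0 0 g
    rw [add_zero] at h
    exact left_eq_add.mp h
  have ip_add_right : ∀ f g h : U, ip f (g + h) = ip f g + ip f h := by
    intro f g h
    have h0 := congrArg star (hip_add g h f)
    rwa [star_add, hip_star, hip_star, hip_star] at h0
  have ip_sub_left : ∀ f g h : U, ip (f - g) h = ip f h - ip g h := by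
    intro f g h
    have h0 := hip_add (f - g) g h
    rw [sub_add_cancel] at h0
    exact eq_sub_of_add_eq h0.symm
  have ip_sub_right : ∀ f g h : U, ip f (g - h) = ip f g - ip f h := by
    intro f g h
    have h0 := congrArg star (ip_sub_left g h f)
    rwa [star_sub, hip_star, hip_star, hip_star] at h0
  have ip_smul_right : ∀ (a : A) (f g : U), ip f (a • g) = ip f g * star a := by
    intro a f g
    have h0 := congrArg star (hip_smul a g f)
    rwa [star_mul, hip_star, hip_star] at h0
  -- ## adjointness of S and Sinv
  have hS_adj : ∀ f h : U, ip f (S h) = ip (S f) h := by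
    intro f h
    rw [hS f h, ← hip_star, hS h f, ← int_star]
    congr 1
    funext ω
    rw [star_mul, hip_star, hip_star]
  have hSinv_adj : ∀ f h : U, ip f (Sinv h) = ip (Sinv f) h := by
    intro f h
    conv_lhs => rw [← hSinv₂ f]
    rw [← hS_adj, hSinv₂]
  -- ## the "starred" dual relation
  have hdual' : ∀ x y : U, ∫ ω, ip x (F ω) * ip (G₁ ω) y ∂μ = ip x y := by
    intro x y
    rw [← hip_star y x, ← hG₁dual y x, ← int_star]
    congr 1
    funext ω
    rw [star_mul, hip_star, hip_star]
  -- ## integrability of the mixed terms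
  have IX : ∀ x y : U, Integrable (fun ω => ip x (G₁ ω) * ip (F ω) y) μ := by
    intro x y
    have key : ∀ y' : U, ip x y' ≠ 0 → Integrable (fun ω => ip x (G₁ ω) * ip (F ω) y') μ := by
      intro y' hne
      by_contra hni
      exact hne ((hG₁dual x y').symm.trans (integral_undef hni))
    by_cases hx : ip x x = 0
    · have hx0 : x = 0 := hip_def x hx
      have heq : (fun ω => ip x (G₁ ω) * ip (F ω) y) = fun _ => (0 : A) := by
        funext ω
        rw [hx0, ip_zero_left, zero_mul]
      rw [heq]
      exact integrable_zero _ _ _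
    · by_cases hxy : ip x y = 0
      · have h1 : ip x (y + x) ≠ 0 := by
          rw [ip_add_right, hxy, zero_add]
          exact hx
        have i1 := key (y + x) h1
        have i2 := key x hx
        have heq : (fun ω => ip x (G₁ ω) * ip (F ω) y) =
            fun ω => ip x (G₁ ω) * ip (F ω) (y + x) - ip x (G₁ ω) * ip (F ω) x := by
          funext ω
          rw [ip_add_right, mul_add, add_sub_cancel_right]
        rw [heq]
        exact i1.sub i2
      · exact key y hxy
  have IX' : ∀ x y : U, Integrable (fun ω => ip x (F ω) * ip (G₁ ω) y) μ := by
    intro x y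
    have h := int_star' _ (IX y x)
    have heq : (fun ω => star (ip y (G₁ ω) * ip (F ω) x)) =
        fun ω => ip x (F ω) * ip (G₁ ω) y := by
      funext ω
      rw [star_mul, hip_star, hip_star]
    rwa [heq] at h
  -- ## frame operator basics
  have hS_low : ∀ z : U, A₀ • ip z z ≤ ip (S z) z := by
    intro z
    rw [hS z z]
    exact (hFbd z).1
  have hS_up : ∀ z : U, ip (S z) z ≤ B₀ • ip z z := by
    intro z
    rw [hS z z]
    exact (hFbd z).2
  have hS_pos : ∀ z : U, 0 ≤ ip (S z) z :=
    fun z => le_trans (smul_nonneg' A₀ hA₀.le _ (hip_pos z)) (hS_low z)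
  have hτ_star : ∀ z : U, star (ip (S z) z) = ip (S z) z := by
    intro z
    rw [hip_star, hS_adj]
  -- ## bound on ⟨f, Sinv f⟩
  have hσ : ∀ f : U, ip f (Sinv f) ≤ A₀⁻¹ • ip f f := by
    intro f
    have hfu : ip f (Sinv f) = ip (S (Sinv f)) (Sinv f) := by rw [hSinv₂]
    have hσsa : star (ip f (Sinv f)) = ip f (Sinv f) := by
      rw [hfu]
      exact hτ_star _
    have huf : ip (Sinv f) f = ip f (Sinv f) := by
      rw [← hip_star]
      exact hσsa
    have hstar_a : star (A₀ • (1 : A)) = A₀ • (1 : A) := by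
      rw [star_smul, star_one, star_trivial]
    have ha_mul : ∀ x : A, (A₀ • (1 : A)) * x = A₀ • x := fun x => by
      rw [smul_mul_assoc, one_mul]
    have hmul_a : ∀ x : A, x * (A₀ • (1 : A)) = A₀ • x := fun x => by
      rw [mul_smul_comm, mul_one]
    have hz := hip_pos (f - (A₀ • (1 : A)) • Sinv f)
    have hexp : ip (f - (A₀ • (1 : A)) • Sinv f) (f - (A₀ • (1 : A)) • Sinv f)
        = ip f f - A₀ • ip f (Sinv f) - A₀ • ip f (Sinv f)
          + A₀ • (A₀ • ip (Sinv f) (Sinv f)) := by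
      simp only [ip_sub_left, ip_sub_right, hip_smul, ip_smul_right, hstar_a, ha_mul, hmul_a,
        huf, smul_sub, smul_smul]
      abel
    rw [hexp] at hz
    have h2 : A₀ • (A₀ • ip (Sinv f) (Sinv f)) ≤ A₀ • ip f (Sinv f) := by
      apply smul_le A₀ hA₀.le
      have h3 := hS_low (Sinv f)
      rwa [← hfu] at h3
    have h4 : ip f f - A₀ • ip f (Sinv f) - A₀ • ip f (Sinv f)
        + A₀ • (A₀ • ip (Sinv f) (Sinv f)) ≤ ip f f - A₀ • ip f (Sinv f) := by
      calc ip f f - A₀ • ip f (Sinv f) - A₀ • ip f (Sinv f) + A₀ • (A₀ • ip (Sinv f) (Sinv f))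
          ≤ ip f f - A₀ • ip f (Sinv f) - A₀ • ip f (Sinv f) + A₀ • ip f (Sinv f) :=
            add_le_add_right h2 _
        _ = ip f f - A₀ • ip f (Sinv f) := by abel
    have h5 : A₀ • ip f (Sinv f) ≤ ip f f := sub_nonneg.mp (le_trans hz h4)
    have h6 := smul_le A₀⁻¹ (by positivity) _ _ h5
    rwa [smul_smul, inv_mul_cancel₀ hA₀.ne', one_smul] at h6
  -- ## bound on ⟨S f, S f⟩
  have expand : ∀ (r : ℝ) (x x' y y' : A),
      (x - r • x') * (y - r • y') = x * y - r • (x * y') - r • (x' * y) + (r * r) • (x' * y') := by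
    intro r x x' y y'
    simp only [sub_mul, mul_sub, smul_mul_assoc, mul_smul_comm, smul_sub, smul_smul]
    abel
  have hg_bound : ∀ f : U, ip (S f) (S f) ≤ B₀ • ip (S f) f := by
    intro f
    have hstar_b : star (B₀ • (1 : A)) = B₀ • (1 : A) := by
      rw [star_smul, star_one, star_trivial]
    set z : U := S f - (B₀ • (1 : A)) • f with hzdef
    have hzF : ∀ ω, ip z (F ω) = ip (S f) (F ω) - B₀ • ip f (F ω) := by
      intro ω
      rw [hzdef, ip_sub_left, hip_smul, smul_mul_assoc, one_mul]
    have hFz : ∀ ω, ip (F ω) z = ip (F ω) (S f) - B₀ • ip (F ω) f := by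
      intro ω
      rw [hzdef, ip_sub_right, ip_smul_right, hstar_b, mul_smul_comm, mul_one]
    have heq : (fun ω => ip z (F ω) * ip (F ω) z) =
        fun ω => ip (S f) (F ω) * ip (F ω) (S f) - B₀ • (ip (S f) (F ω) * ip (F ω) f)
          - B₀ • (ip f (F ω) * ip (F ω) (S f)) + (B₀ * B₀) • (ip f (F ω) * ip (F ω) f) := by
      funext ω
      rw [hzF, hFz, expand]
    have hI : ∫ ω, ip z (F ω) * ip (F ω) z ∂μ
        = ip (S (S f)) (S f) - B₀ • ip (S (S f)) f - B₀ • ip (S f) (S f)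
          + (B₀ * B₀) • ip (S f) f := by
      have i1 : Integrable (fun ω => ip (S f) (F ω) * ip (F ω) (S f)) μ := hFint _ _
      have i2 : Integrable (fun ω => B₀ • (ip (S f) (F ω) * ip (F ω) f)) μ :=
        intSmul _ _ (hFint _ _)
      have i3 : Integrable (fun ω => B₀ • (ip f (F ω) * ip (F ω) (S f))) μ :=
        intSmul _ _ (hFint _ _)
      have i4 : Integrable (fun ω => (B₀ * B₀) • (ip f (F ω) * ip (F ω) f)) μ :=
        intSmul _ _ (hFint _ _)
      have i12 : Integrable (fun ω => ip (S f) (F ω) * ip (F ω) (S f)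
          - B₀ • (ip (S f) (F ω) * ip (F ω) f)) μ := i1.sub i2
      have i123 : Integrable (fun ω => ip (S f) (F ω) * ip (F ω) (S f)
          - B₀ • (ip (S f) (F ω) * ip (F ω) f) - B₀ • (ip f (F ω) * ip (F ω) (S f))) μ :=
        i12.sub i3
      rw [heq, integral_add i123 i4, integral_sub i12 i3, integral_sub i1 i2,
        integral_smul, integral_smul, integral_smul, ← hS, ← hS, ← hS, ← hS]
    have hpos : (0 : A) ≤ ∫ ω, ip z (F ω) * ip (F ω) z ∂μ :=
      le_trans (smul_nonneg' A₀ hA₀.le _ (hip_pos z)) (hFbd z).1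
    rw [hI] at hpos
    -- identify the cross terms
    have hSSf : ip (S (S f)) f = ip (S f) (S f) := (hS_adj (S f) f).symm
    rw [hSSf] at hpos
    have hSSf2 : ip (S (S f)) (S f) ≤ B₀ • ip (S f) (S f) := hS_up (S f)
    have h7 : (0 : A) ≤ B₀ • ip (S f) (S f) - B₀ • ip (S f) (S f) - B₀ • ip (S f) (S f)
        + (B₀ * B₀) • ip (S f) f := by
      refine le_trans hpos ?_
      have := add_le_add_left (sub_le_sub_right (sub_le_sub_right hSSf2
        (B₀ • ip (S f) (S f))) (B₀ • ip (S f) (S f))) ((B₀ * B₀) • ip (S f) f)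
      exact this
    have h8 : B₀ • ip (S f) (S f) ≤ (B₀ * B₀) • ip (S f) f := by
      have h9 : B₀ • ip (S f) (S f) - B₀ • ip (S f) (S f) - B₀ • ip (S f) (S f)
          + (B₀ * B₀) • ip (S f) f = (B₀ * B₀) • ip (S f) f - B₀ • ip (S f) (S f) := by abel
      rw [h9] at h7
      exact sub_nonneg.mp h7
    have h10 := smul_le B₀⁻¹ (by positivity) _ _ h8
    rwa [smul_smul, smul_smul, inv_mul_cancel₀ hB₀.ne', one_smul, ← mul_assoc,
      inv_mul_cancel₀ hB₀.ne', one_mul] at h10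
  -- ## the formula ⟨f, G₂ ω⟩ = P f ω and ⟨G₂ ω, g⟩
  have hP : ∀ (x : U) (ω : Ω), ip x (Sinv (F ω) + S (G₁ ω) - F ω)
      = ip (Sinv x) (F ω) + ip (S x) (G₁ ω) - ip x (F ω) := by
    intro x ω
    rw [ip_sub_right, ip_add_right, hSinv_adj, hS_adj]
  have hQ : ∀ (y : U) (ω : Ω), ip (Sinv (F ω) + S (G₁ ω) - F ω) y
      = ip (F ω) (Sinv y) + ip (G₁ ω) (S y) - ip (F ω) y := by
    intro y ω
    rw [← hip_star y (Sinv (F ω) + S (G₁ ω) - F ω), hP, star_sub, star_add,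
      hip_star, hip_star, hip_star]
  -- the nine-term expansion of the Bessel integrand
  have hbig : ∀ f g : U, (fun ω => ip f (Sinv (F ω) + S (G₁ ω) - F ω)
        * ip (Sinv (F ω) + S (G₁ ω) - F ω) g) =
      fun ω =>
        (ip (Sinv f) (F ω) * ip (F ω) (Sinv g) + ip (Sinv f) (F ω) * ip (G₁ ω) (S g)
          - ip (Sinv f) (F ω) * ip (F ω) g)
        + (ip (S f) (G₁ ω) * ip (F ω) (Sinv g) + ip (S f) (G₁ ω) * ip (G₁ ω) (S g)
          - ip (S f) (G₁ ω) * ip (F ω) g)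
        - (ip f (F ω) * ip (F ω) (Sinv g) + ip f (F ω) * ip (G₁ ω) (S g)
          - ip f (F ω) * ip (F ω) g) := by
    intro f g
    funext ω
    rw [hP, hQ]
    noncomm_ring
  have hbigint : ∀ f g : U, Integrable (fun ω => ip f (Sinv (F ω) + S (G₁ ω) - F ω)
      * ip (Sinv (F ω) + S (G₁ ω) - F ω) g) μ := by
    intro f g
    rw [hbig]
    exact ((((hFint _ _).add (IX' _ _)).sub (hFint _ _)).add
        (((IX _ _).add (hG₁int _ _)).sub (IX _ _))).sub
      (((hFint _ _).add (IX' _ _)).sub (hFint _ _))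
  -- value of the diagonal Bessel integral
  have hval : ∀ f : U, ∫ ω, ip f (Sinv (F ω) + S (G₁ ω) - F ω)
        * ip (Sinv (F ω) + S (G₁ ω) - F ω) f ∂μ
      = ip f (Sinv f) + (∫ ω, ip (S f) (G₁ ω) * ip (G₁ ω) (S f) ∂μ) - ip (S f) f := by
    intro f
    rw [hbig f f]
    have iA1 : Integrable (fun ω => ip (Sinv f) (F ω) * ip (F ω) (Sinv f)
        + ip (Sinv f) (F ω) * ip (G₁ ω) (S f)) μ := (hFint _ _).add (IX' _ _)
    have iA : Integrable (fun ω => ip (Sinv f) (F ω) * ip (F ω) (Sinv f)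
        + ip (Sinv f) (F ω) * ip (G₁ ω) (S f) - ip (Sinv f) (F ω) * ip (F ω) f) μ :=
      iA1.sub (hFint _ _)
    have iB1 : Integrable (fun ω => ip (S f) (G₁ ω) * ip (F ω) (Sinv f)
        + ip (S f) (G₁ ω) * ip (G₁ ω) (S f)) μ := (IX _ _).add (hG₁int _ _)
    have iB : Integrable (fun ω => ip (S f) (G₁ ω) * ip (F ω) (Sinv f)
        + ip (S f) (G₁ ω) * ip (G₁ ω) (S f) - ip (S f) (G₁ ω) * ip (F ω) f) μ :=
      iB1.sub (IX _ _)
    have iC1 : Integrable (fun ω => ip f (F ω) * ip (F ω) (Sinv f)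
        + ip f (F ω) * ip (G₁ ω) (S f)) μ := (hFint _ _).add (IX' _ _)
    have iC : Integrable (fun ω => ip f (F ω) * ip (F ω) (Sinv f)
        + ip f (F ω) * ip (G₁ ω) (S f) - ip f (F ω) * ip (F ω) f) μ := iC1.sub (hFint _ _)
    have eTop := int3
      (fun ω => ip (Sinv f) (F ω) * ip (F ω) (Sinv f)
        + ip (Sinv f) (F ω) * ip (G₁ ω) (S f) - ip (Sinv f) (F ω) * ip (F ω) f)
      (fun ω => ip (S f) (G₁ ω) * ip (F ω) (Sinv f)
        + ip (S f) (G₁ ω) * ip (G₁ ω) (S f) - ip (S f) (G₁ ω) * ip (F ω) f)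
      (fun ω => ip f (F ω) * ip (F ω) (Sinv f)
        + ip f (F ω) * ip (G₁ ω) (S f) - ip f (F ω) * ip (F ω) f) iA iB iC
    have eA := int3 (fun ω => ip (Sinv f) (F ω) * ip (F ω) (Sinv f))
      (fun ω => ip (Sinv f) (F ω) * ip (G₁ ω) (S f))
      (fun ω => ip (Sinv f) (F ω) * ip (F ω) f) (hFint _ _) (IX' _ _) (hFint _ _)
    have eB := int3 (fun ω => ip (S f) (G₁ ω) * ip (F ω) (Sinv f))
      (fun ω => ip (S f) (G₁ ω) * ip (G₁ ω) (S f))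
      (fun ω => ip (S f) (G₁ ω) * ip (F ω) f) (IX _ _) (hG₁int _ _) (IX _ _)
    have eC := int3 (fun ω => ip f (F ω) * ip (F ω) (Sinv f))
      (fun ω => ip f (F ω) * ip (G₁ ω) (S f))
      (fun ω => ip f (F ω) * ip (F ω) f) (hFint _ _) (IX' _ _) (hFint _ _)
    rw [eTop, eA, eB, eC]
    have v1 : ∫ ω, ip (Sinv f) (F ω) * ip (F ω) (Sinv f) ∂μ = ip f (Sinv f) := by
      rw [← hS, hSinv₂]
    have v2 : ∫ ω, ip (Sinv f) (F ω) * ip (G₁ ω) (S f) ∂μ = ip f f := by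
      rw [hdual', hS_adj, hSinv₂]
    have v3 : ∫ ω, ip (Sinv f) (F ω) * ip (F ω) f ∂μ = ip f f := by
      rw [← hS, hSinv₂]
    have v4 : ∫ ω, ip (S f) (G₁ ω) * ip (F ω) (Sinv f) ∂μ = ip f f := by
      rw [hG₁dual, hSinv_adj, hSinv₁]
    have v6 : ∫ ω, ip (S f) (G₁ ω) * ip (F ω) f ∂μ = ip (S f) f := hG₁dual (S f) f
    have v7 : ∫ ω, ip f (F ω) * ip (F ω) (Sinv f) ∂μ = ip f f := by
      rw [← hS, hSinv_adj, hSinv₁]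
    have v8 : ∫ ω, ip f (F ω) * ip (G₁ ω) (S f) ∂μ = ip (S f) f := by
      rw [hdual', hS_adj]
    have v9 : ∫ ω, ip f (F ω) * ip (F ω) f ∂μ = ip (S f) f := (hS f f).symm
    rw [v1, v2, v3, v4, v6, v7, v8, v9]
    abel
  -- ## conclusion
  refine ⟨⟨A₀⁻¹ + B₁ * B₀ * B₀, by positivity, ?_, ?_⟩, ?_⟩
  · -- integrability part of IsBessel
    intro f g
    exact hbigint f g
  · -- Bessel bound
    intro f
    have hval' := hval f
    calc ∫ ω, ip f (Sinv (F ω) + S (G₁ ω) - F ω) * ip (Sinv (F ω) + S (G₁ ω) - F ω) f ∂μ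
        = ip f (Sinv f) + (∫ ω, ip (S f) (G₁ ω) * ip (G₁ ω) (S f) ∂μ) - ip (S f) f := hval'
      _ ≤ ip f (Sinv f) + ∫ ω, ip (S f) (G₁ ω) * ip (G₁ ω) (S f) ∂μ :=
          sub_le_self _ (hS_pos f)
      _ ≤ A₀⁻¹ • ip f f + (B₁ * B₀ * B₀) • ip f f := by
          refine add_le_add (hσ f) ?_
          have j1 : ∫ ω, ip (S f) (G₁ ω) * ip (G₁ ω) (S f) ∂μ ≤ B₁ • ip (S f) (S f) :=
            hG₁bd (S f)
          have j2 : B₁ • ip (S f) (S f) ≤ B₁ • (B₀ • ip (S f) f) :=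
            smul_le B₁ hB₁.le _ _ (hg_bound f)
          have j3 : B₁ • (B₀ • ip (S f) f) ≤ B₁ • (B₀ • (B₀ • ip f f)) :=
            smul_le B₁ hB₁.le _ _ (smul_le B₀ hB₀.le _ _ (hS_up f))
          have j4 : B₁ • (B₀ • (B₀ • ip f f)) = (B₁ * B₀ * B₀) • ip f f := by
            rw [smul_smul, smul_smul, mul_assoc]
          exact le_trans j1 (le_trans j2 (j3.trans_eq j4))
      _ = (A₀⁻¹ + B₁ * B₀ * B₀) • ip f f := (add_smul _ _ _).symm
  · -- duality
    intro f g
    have heqd : (fun ω => ip f (Sinv (F ω) + S (G₁ ω) - F ω) * ip (F ω) g) =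
        fun ω => ip (Sinv f) (F ω) * ip (F ω) g + ip (S f) (G₁ ω) * ip (F ω) g
          - ip f (F ω) * ip (F ω) g := by
      funext ω
      rw [hP, sub_mul, add_mul]
    calc ∫ ω, ip f (Sinv (F ω) + S (G₁ ω) - F ω) * ip (F ω) g ∂μ
        = (∫ ω, ip (Sinv f) (F ω) * ip (F ω) g ∂μ) + (∫ ω, ip (S f) (G₁ ω) * ip (F ω) g ∂μ)
          - ∫ ω, ip f (F ω) * ip (F ω) g ∂μ := by
          rw [heqd]
          exact int3 (fun ω => ip (Sinv f) (F ω) * ip (F ω) g)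
            (fun ω => ip (S f) (G₁ ω) * ip (F ω) g)
            (fun ω => ip f (F ω) * ip (F ω) g) (hFint _ _) (IX _ _) (hFint _ _)
      _ = ip f g + ip (S f) g - ip (S f) g := by
          rw [← hS, hSinv₂, hG₁dual, ← hS]
      _ = ip f g := by abel
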